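/- Adjointness of the EAKF and ETKF transformations: let E be a d×M matrix, P = E Eᵀ, H a q×d matrix, R a symmetric positive definite q×q matrix. Define A = P^{1/2} (Id + P^{1/2} Hᵀ R^{-1} H P^{1/2})^{-1/2} (P^{1/2})^{+} and T = (Id_M + Eᵀ Hᵀ R^{-1} H E)^{-1/2}, where (P^{1/2})^{+} is the Moore–Penrose pseudo-inverse of P^{1/2}. Then A E = E T. -/

import Mathlib

open Matrix

namespace Matrix.PosSemidef

open scoped ComplexOrder

/-- The positive semidefinite square root of a positive semidefinite matrix
(the definition removed from Mathlib, restored verbatim). -/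
noncomputable def sqrt {n : Type*} [Fintype n] [DecidableEq n] {𝕜 : Type*} [RCLike 𝕜]
    {A : Matrix n n 𝕜} (hA : PosSemidef A) : Matrix n n 𝕜 :=
  hA.1.eigenvectorUnitary.1 * diagonal ((↑) ∘ (√·) ∘ hA.1.eigenvalues) *
    (star hA.1.eigenvectorUnitary : Matrix n n 𝕜)

end Matrix.PosSemidef

lemma psd_sqrt_mul_self_real {n : Type*} [Fintype n] [DecidableEq n] {A : Matrix n n ℝ}
    (hA : A.PosSemidef) : hA.sqrt * hA.sqrt = A := by
  have hsp := hA.1.spectral_theorem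
  unfold Matrix.PosSemidef.sqrt
  set U : Matrix n n ℝ := (hA.1.eigenvectorUnitary : Matrix n n ℝ) with hUdef
  have hU : star U * U = 1 := mem_unitaryGroup_iff'.mp (hA.1.eigenvectorUnitary).2
  set D := diagonal (((↑) : ℝ → ℝ) ∘ (√·) ∘ hA.1.eigenvalues)
  have hD : D * D = diagonal (fun i => ((hA.1.eigenvalues i : ℝ) : ℝ)) := by
    rw [diagonal_mul_diagonal]
    congr 1; funext i
    simp [Real.mul_self_sqrt (hA.eigenvalues_nonneg i)]
  calc U * D * star U * (U * D * star U) = U * (D * (star U * U) * D) * star U := by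
          simp only [Matrix.mul_assoc]
    _ = A := by
      rw [hU, Matrix.mul_one, hD]
      simpa [Unitary.conjStarAlgAut_apply, Matrix.mul_assoc] using hsp.symm

lemma psd_sqrt_isHermitian_real {n : Type*} [Fintype n] [DecidableEq n] {A : Matrix n n ℝ}
    (hA : A.PosSemidef) : hA.sqrt.IsHermitian := by
  unfold Matrix.PosSemidef.sqrt IsHermitian
  simp [Matrix.mul_assoc, star_eq_conjTranspose, conjTranspose_eq_transpose_of_trivial]

lemma sqrt_intertwine {n m : Type*} [Fintype n] [Fintype m] [DecidableEq n] [DecidableEq m]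
    {A : Matrix n n ℝ} {B : Matrix m m ℝ} (hA : A.PosSemidef) (hB : B.PosSemidef)
    (X : Matrix n m ℝ) (h : A * X = X * B) : hA.sqrt * X = X * hB.sqrt := by
  set U : Matrix n n ℝ := (hA.1.eigenvectorUnitary : Matrix n n ℝ)
  set V : Matrix m m ℝ := (hB.1.eigenvectorUnitary : Matrix m m ℝ)
  have hU1 : star U * U = 1 := mem_unitaryGroup_iff'.mp (hA.1.eigenvectorUnitary).2
  have hU2 : U * star U = 1 := mem_unitaryGroup_iff.mp (hA.1.eigenvectorUnitary).2
  have hV1 : star V * V = 1 := mem_unitaryGroup_iff'.mp (hB.1.eigenvectorUnitary).2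
  have hV2 : V * star V = 1 := mem_unitaryGroup_iff.mp (hB.1.eigenvectorUnitary).2
  have hU1' : ∀ (Z : Matrix n m ℝ), star U * (U * Z) = Z := fun Z => by
    rw [← Matrix.mul_assoc, hU1, Matrix.one_mul]
  have hU2' : ∀ (Z : Matrix n m ℝ), U * (star U * Z) = Z := fun Z => by
    rw [← Matrix.mul_assoc, hU2, Matrix.one_mul]
  set a := hA.1.eigenvalues
  set b := hB.1.eigenvalues
  set Y : Matrix n m ℝ := star U * X * V with hYdef
  have hY : diagonal a * Y = Y * diagonal b := by
    have hA' : A = U * diagonal a * star U := by simpa using hA.1.spectral_theorem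
    have hB' : B = V * diagonal b * star V := by simpa using hB.1.spectral_theorem
    have h' := h
    rw [hA', hB'] at h'
    calc diagonal a * Y = star U * (U * diagonal a * star U * X) * V := by
          simp only [hYdef, Matrix.mul_assoc, hU1', hU2']
      _ = star U * (X * (V * diagonal b * star V)) * V := by rw [h']
      _ = Y * diagonal b := by
          simp only [hYdef, Matrix.mul_assoc, hV1, hV2, Matrix.mul_one]
  have hY' : diagonal (Real.sqrt ∘ a) * Y = Y * diagonal (Real.sqrt ∘ b) := by
    ext i j
    simp only [diagonal_mul, mul_diagonal, Function.comp_apply]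
    have h0 := congrFun (congrFun hY i) j
    simp only [diagonal_mul, mul_diagonal] at h0
    by_cases hz : Y i j = 0
    · rw [hz]; ring
    · have hab : a i = b j := by
        exact mul_right_cancel₀ hz (h0.trans (mul_comm _ _))
      rw [hab]; ring
  have hsq : hA.sqrt = U * diagonal (Real.sqrt ∘ a) * star U := by
    rw [Matrix.PosSemidef.sqrt]; norm_num; rfl
  have hsq' : hB.sqrt = V * diagonal (Real.sqrt ∘ b) * star V := by
    rw [Matrix.PosSemidef.sqrt]; norm_num; rfl
  calc hA.sqrt * X = U * diagonal (Real.sqrt ∘ a) * (star U * X * V) * star V := by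
        rw [hsq]; simp only [Matrix.mul_assoc, hV2, Matrix.mul_one]
    _ = U * (diagonal (Real.sqrt ∘ a) * Y) * star V := by simp only [hYdef, Matrix.mul_assoc]
    _ = U * (Y * diagonal (Real.sqrt ∘ b)) * star V := by rw [hY']
    _ = (U * (star U * X * V)) * diagonal (Real.sqrt ∘ b) * star V := by
        simp only [hYdef, Matrix.mul_assoc]
    _ = X * hB.sqrt := by
        rw [hsq']; simp only [Matrix.mul_assoc, hU2', hU1']

lemma stmt6_aux {d q M : ℕ} (E : Matrix (Fin d) (Fin M) ℝ)
    (H : Matrix (Fin q) (Fin d) ℝ) (R : Matrix (Fin q) (Fin q) ℝ)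
    (S G : Matrix (Fin d) (Fin d) ℝ) (hSym : Sᵀ = S) (hSS : S * S = E * Eᵀ)
    (hG1 : S * G * S = S) (hG3 : (S * G)ᵀ = S * G) (hG4 : (G * S)ᵀ = G * S)
    (h1 : (1 + S * Hᵀ * R⁻¹ * H * S).PosDef)
    (h2 : ((1 : Matrix (Fin M) (Fin M) ℝ) + Eᵀ * Hᵀ * R⁻¹ * H * E).PosDef) :
    S * (h1.posSemidef.sqrt)⁻¹ * G * E = E * (h2.posSemidef.sqrt)⁻¹ := by
  set s1 := h1.posSemidef.sqrt with hs1
  set s2 := h2.posSemidef.sqrt with hs2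
  have eq2 : G * S * S = S := by
    have h := congrArg Matrix.transpose hG1
    rw [Matrix.mul_assoc, transpose_mul, hG4, hSym] at h
    exact h
  have key0 : S * (G * E) = E := by
    have hQ : S * G * (E * Eᵀ) = E * Eᵀ := by
      rw [← hSS, ← Matrix.mul_assoc, hG1]
    have hQE : (S * G - 1) * (E * Eᵀ) = 0 := by
      rw [Matrix.sub_mul, hQ, Matrix.one_mul, sub_self]
    have hzero : (S * G - 1) * E = 0 := by
      apply Matrix.self_mul_conjTranspose_eq_zero.mp
      rw [conjTranspose_mul]
      simp only [conjTranspose_eq_transpose_of_trivial]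
      calc (S*G-1)*E*(Eᵀ*(S*G-1)ᵀ) = (S*G-1)*(E*Eᵀ)*(S*G-1)ᵀ := by
            simp only [Matrix.mul_assoc]
        _ = 0 := by rw [hQE, Matrix.zero_mul]
    rw [← Matrix.mul_assoc]
    calc S * G * E = (S * G - 1) * E + E := by
          rw [Matrix.sub_mul, Matrix.one_mul, sub_add_cancel]
      _ = E := by rw [hzero, zero_add]
  have key2 : G * (E * Eᵀ) = S := by
    rw [← hSS, ← Matrix.mul_assoc, eq2]
  have hcomm : (1 + S * Hᵀ * R⁻¹ * H * S) * (G * E)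
      = (G * E) * (1 + Eᵀ * Hᵀ * R⁻¹ * H * E) := by
    simp only [Matrix.add_mul, Matrix.mul_add, Matrix.one_mul, Matrix.mul_one, Matrix.mul_assoc]
    rw [key0]
    congr 1
    conv_rhs => rw [← Matrix.mul_assoc E Eᵀ _, ← Matrix.mul_assoc G (E * Eᵀ) _, key2]
  have hs := sqrt_intertwine h1.posSemidef h2.posSemidef (G * E) hcomm
  have hd1 : IsUnit s1.det := by
    refine isUnit_iff_ne_zero.mpr fun h0 => ?_
    have hdet : s1.det * s1.det = (1 + S * Hᵀ * R⁻¹ * H * S).det := by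
      rw [← det_mul, psd_sqrt_mul_self_real h1.posSemidef]
    rw [h0, mul_zero] at hdet
    exact absurd h1.det_pos (by rw [← hdet]; exact lt_irrefl 0)
  have hd2 : IsUnit s2.det := by
    refine isUnit_iff_ne_zero.mpr fun h0 => ?_
    have hdet : s2.det * s2.det = ((1 : Matrix (Fin M) (Fin M) ℝ) + Eᵀ * Hᵀ * R⁻¹ * H * E).det := by
      rw [← det_mul, psd_sqrt_mul_self_real h2.posSemidef]
    rw [h0, mul_zero] at hdet
    exact absurd h2.det_pos (by rw [← hdet]; exact lt_irrefl 0)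
  have h' : s1⁻¹ * (s1 * (G * E)) = G * E := by
    rw [← Matrix.mul_assoc, nonsing_inv_mul _ hd1, Matrix.one_mul]
  have hinv : s1⁻¹ * (G * E) = (G * E) * s2⁻¹ := by
    calc s1⁻¹ * (G * E) = s1⁻¹ * (G * E) * (s2 * s2⁻¹) := by
          rw [mul_nonsing_inv _ hd2, Matrix.mul_one]
      _ = s1⁻¹ * ((G * E) * s2) * s2⁻¹ := by simp only [Matrix.mul_assoc]
      _ = s1⁻¹ * (s1 * (G * E)) * s2⁻¹ := by rw [hs]
      _ = (G * E) * s2⁻¹ := by rw [h']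
  calc S * s1⁻¹ * G * E = S * (s1⁻¹ * (G * E)) := by simp only [Matrix.mul_assoc]
    _ = S * ((G * E) * s2⁻¹) := by rw [hinv]
    _ = S * (G * E) * s2⁻¹ := by rw [← Matrix.mul_assoc S (G * E) s2⁻¹]
    _ = E * s2⁻¹ := by rw [key0]

/-- Adjointness of the EAKF and ETKF transformations: with `P = E Eᵀ`,
`A = P^{1/2} (Id + P^{1/2} Hᵀ R⁻¹ H P^{1/2})^{-1/2} (P^{1/2})⁺` and
`T = (Id_M + Eᵀ Hᵀ R⁻¹ H E)^{-1/2}`, where `(P^{1/2})⁺` is the Moore–Penrose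
pseudo-inverse of `P^{1/2}`, one has `A E = E T`. -/
theorem stmt_6 {d q M : ℕ} (E : Matrix (Fin d) (Fin M) ℝ)
    (H : Matrix (Fin q) (Fin d) ℝ) (R : Matrix (Fin q) (Fin q) ℝ) (hR : R.PosDef)
    (P : Matrix (Fin d) (Fin d) ℝ) (hPE : P = E * Eᵀ) (hP : P.PosSemidef)
    -- `G` is the Moore–Penrose pseudo-inverse of `P^{1/2}`:
    (G : Matrix (Fin d) (Fin d) ℝ)
    (hG1 : hP.sqrt * G * hP.sqrt = hP.sqrt)
    (hG2 : G * hP.sqrt * G = G)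
    (hG3 : (hP.sqrt * G)ᵀ = hP.sqrt * G)
    (hG4 : (G * hP.sqrt)ᵀ = G * hP.sqrt)
    -- positive definiteness of the matrices whose inverse square roots are taken:
    (h1 : (1 + hP.sqrt * Hᵀ * R⁻¹ * H * hP.sqrt).PosDef)
    (h2 : ((1 : Matrix (Fin M) (Fin M) ℝ) + Eᵀ * Hᵀ * R⁻¹ * H * E).PosDef)
    (A : Matrix (Fin d) (Fin d) ℝ) (hA : A = hP.sqrt * (h1.posSemidef.sqrt)⁻¹ * G)
    (T : Matrix (Fin M) (Fin M) ℝ) (hT : T = (h2.posSemidef.sqrt)⁻¹) :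
    A * E = E * T := by
  have hSym : (hP.sqrt)ᵀ = hP.sqrt := by
    rw [← conjTranspose_eq_transpose_of_trivial]
    exact psd_sqrt_isHermitian_real hP
  have hSS : hP.sqrt * hP.sqrt = E * Eᵀ := by
    rw [psd_sqrt_mul_self_real hP, hPE]
  rw [hA, hT]
  exact stmt6_aux E H R hP.sqrt G hSym hSS hG1 hG3 hG4 h1 h2
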